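/- arXiv:2109.00735 — 8 statements merged into one kernel-verified Lean document; each statement's English description precedes it below -/
import Mathlib

section
/- Let R be a finite Frobenius ring and let a, b be units in R. Then the quaternion ring H_{a,b}(R) is also a Frobenius ring. -/
open scoped Quaternion

/-- A finite ring is Frobenius if it admits a generating character: an additive
character into the circle group whose kernel contains no nonzero left ideals. -/
def IsFrobeniusRing (R : Type) [Ring R] : Prop :=
  ∃ χ : AddChar R Circle, ∀ I : Ideal R, (∀ x ∈ I, χ x = 1) → I = ⊥

/-- If `R` is a finite Frobenius ring and `a, b` are units of `R`, then the
quaternion ring `H_{a,b}(R)` is also a Frobenius ring. -/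
theorem quaternion_isFrobeniusRing (R : Type) [CommRing R] [Fintype R] (a b : Rˣ)
    (hR : IsFrobeniusRing R) :
    IsFrobeniusRing ℍ[R, (a : R), (b : R)] := by
  obtain ⟨χ, hχ⟩ := hR
  refine ⟨⟨fun x => χ x.re, by simp, fun x y => by
    simp [QuaternionAlgebra.re_add, AddChar.map_add_eq_mul]⟩, ?_⟩
  intro I hI
  -- key: every element of I has all "re of left multiples" killed, hence re = 0
  have key : ∀ x ∈ I, (x : ℍ[R, (a : R), (b : R)]).re = 0 := by
    intro x hx
    have : Ideal.span {x.re} = ⊥ := by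
      apply hχ
      intro y hy
      obtain ⟨r, rfl⟩ := Ideal.mem_span_singleton'.mp hy
      have hrx : (algebraMap R ℍ[R, (a : R), (b : R)] r) * x ∈ I :=
        I.mul_mem_left _ hx
      have := hI _ hrx
      simpa [QuaternionAlgebra.re_mul] using this
    have := this ▸ Ideal.mem_span_singleton_self x.re
    simpa using this
  ext x
  · simp only [Ideal.mem_bot]
    constructor
    · intro hxI
      have h1 : x.re = 0 := key x hxI
      have hi : ((⟨0, 1, 0, 0⟩ : ℍ[R, (a : R), (b : R)]) * x).re = 0 :=
        key _ (I.mul_mem_left _ hxI)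
      have hj : ((⟨0, 0, 1, 0⟩ : ℍ[R, (a : R), (b : R)]) * x).re = 0 :=
        key _ (I.mul_mem_left _ hxI)
      have hk : ((⟨0, 0, 0, 1⟩ : ℍ[R, (a : R), (b : R)]) * x).re = 0 :=
        key _ (I.mul_mem_left _ hxI)
      simp only [QuaternionAlgebra.re_mul] at hi hj hk
      have h2 : x.imI = 0 := by
        have : (a : R) * x.imI = 0 := by linear_combination hi
        exact (Units.mul_right_eq_zero a).mp this
      have h3 : x.imJ = 0 := by
        have : (b : R) * x.imJ = 0 := by linear_combination hj
        exact (Units.mul_right_eq_zero b).mp this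
      have h4 : x.imK = 0 := by
        have : ((a * b : Rˣ) : R) * x.imK = 0 := by
          push_cast; linear_combination -hk
        exact (Units.mul_right_eq_zero (a * b)).mp this
      ext <;> simp [h1, h2, h3, h4]
    · rintro rfl; exact I.zero_mem
end

section
/- Let R be a finite Frobenius ring with generating character chi. Define chi* on the quaternion ring H_{a,b}(R) by chi*(x_0 + x_1 i + x_2 j + x_3 k) = chi(x_0). Then chi* is an additive character of H_{a,b}(R) whose kernel contains no nonzero left ideals; i.e., chi* is a generating character. -/
open scoped Quaternion

/-- If `χ` is a generating character of the finite Frobenius ring `R`, then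
`χ*(x₀ + x₁ i + x₂ j + x₃ k) = χ(x₀)` defines an additive character of the quaternion
ring `H_{a,b}(R)` whose kernel contains no nonzero left ideals, i.e. a generating
character. -/
theorem quaternion_generating_character (R : Type) [CommRing R] [Fintype R] (a b : Rˣ)
    (χ : AddChar R Circle) (hχ : ∀ I : Ideal R, (∀ x ∈ I, χ x = 1) → I = ⊥) :
    ∃ χs : AddChar ℍ[R, (a : R), (b : R)] Circle,
      (∀ x : ℍ[R, (a : R), (b : R)], χs x = χ x.re) ∧
      ∀ I : Ideal ℍ[R, (a : R), (b : R)], (∀ x ∈ I, χs x = 1) → I = ⊥ := by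
  refine ⟨χ.compAddMonoidHom (AddMonoidHom.mk' (fun x => x.re) (fun x y => rfl)),
    fun x => rfl, ?_⟩
  intro I hI
  rw [eq_bot_iff]
  intro x hx
  have key : ∀ (q : ℍ[R, (a : R), (b : R)]) (r : R), χ (r * (q * x).re) = 1 := by
    intro q r
    have h1 : (r : ℍ[R, (a : R), (b : R)]) * (q * x) ∈ I :=
      I.mul_mem_left _ (I.mul_mem_left q hx)
    have := hI _ h1
    simpa using this
  have hz : ∀ q : ℍ[R, (a : R), (b : R)], (q * x).re = 0 := by
    intro q
    have hJ := hχ (Ideal.span {(q * x).re}) ?_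
    · simpa [Ideal.span_singleton_eq_bot] using hJ
    · intro y hy
      obtain ⟨r, hr⟩ := Ideal.mem_span_singleton'.mp hy
      rw [← hr]; exact key q r
  have h0 := hz 1
  have h1 := hz ⟨0, 1, 0, 0⟩
  have h2 := hz ⟨0, 0, 1, 0⟩
  have h3 := hz ⟨0, 0, 0, 1⟩
  simp [QuaternionAlgebra.re_mul] at h0 h1 h2 h3
  rw [Submodule.mem_bot]
  ext
  · exact h0
  · exact h1
  · exact h2
  · exact ((a * b).mul_right_eq_zero).mp (by rw [Units.val_mul]; exact h3)
end

section
/- Let q be an odd prime power. Then the quaternion ring H(F_q), isomorphic to M_2(F_q), has exactly q^2 + q + 2 idempotent elements. -/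
open scoped Quaternion
open Finset

section Aux

variable {K : Type*} [Field K] [Fintype K] [DecidableEq K]

/-- solutions of `u*v = c` for `c ≠ 0` biject with the units -/
private def mulEqEquivUnits {c : K} (hc : c ≠ 0) : {p : K × K // p.1 * p.2 = c} ≃ Kˣ where
  toFun p := Units.mk0 p.1.1 (by
    intro h; apply hc; rw [← p.2, h, zero_mul])
  invFun u := ⟨(u, (u⁻¹ : Kˣ) * c), by field_simp; exact Units.mul_inv u⟩
  left_inv p := by
    obtain ⟨⟨u, v⟩, hp⟩ := p
    have hu : u ≠ 0 := by intro h; apply hc; rw [← hp, h, zero_mul]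
    ext
    · rfl
    · simp only [Units.mk0, Units.inv_mk]
      field_simp
      rw [mul_comm] at hp
      exact ((mul_comm u v).trans hp).symm
  right_inv u := by ext; rfl

omit [Field K] [DecidableEq K] in
private lemma card_prod_subtype (P : K → K → Prop)
    [DecidablePred fun p : K × K => P p.1 p.2] [∀ a, DecidablePred (P a)] :
    Fintype.card {p : K × K // P p.1 p.2} = ∑ a : K, Fintype.card {b : K // P a b} := by
  rw [Fintype.card_congr (Equiv.subtypeProdEquivSigmaSubtype P), Fintype.card_sigma]

private lemma card_sq_eq (hK : ringChar K ≠ 2) (a : K) :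
    (Fintype.card {x : K // x ^ 2 = a} : ℤ) = quadraticChar K a + 1 := by
  rw [← quadraticChar_card_sqrts hK a, Set.toFinset_card]
  rfl

omit [Fintype K] [DecidableEq K] in
private def hyperbolaEquiv (h2 : (2 : K) ≠ 0) (c : K) :
    {p : K × K // p.2 ^ 2 = p.1 ^ 2 + c} ≃ {p : K × K // p.1 * p.2 = c} where
  toFun p := ⟨(p.1.2 - p.1.1, p.1.2 + p.1.1), by
    have := p.2; ring_nf; linear_combination this⟩
  invFun p := ⟨((p.1.2 - p.1.1) / 2, (p.1.2 + p.1.1) / 2), by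
    have := p.2; field_simp; linear_combination (4 : K) * this⟩
  left_inv p := by
    obtain ⟨⟨x, y⟩, hp⟩ := p
    ext <;> · simp only []; field_simp; ring
  right_inv p := by
    obtain ⟨⟨u, v⟩, hp⟩ := p
    ext <;> · simp only []; field_simp; ring

private lemma sum_quadChar_sq_add (hK : ringChar K ≠ 2) {c : K} (hc : c ≠ 0) :
    ∑ x : K, quadraticChar K (x ^ 2 + c) = -1 := by
  classical
  have h2 : (2 : K) ≠ 0 := Ring.two_ne_zero hK
  set N := Fintype.card {p : K × K // p.2 ^ 2 = p.1 ^ 2 + c} with hN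
  have hcard : N = Fintype.card K - 1 := by
    rw [hN, Fintype.card_congr ((hyperbolaEquiv h2 c).trans (mulEqEquivUnits hc)),
      Fintype.card_units]
  have h1 : (N : ℤ) = Fintype.card K + ∑ x : K, quadraticChar K (x ^ 2 + c) := by
    rw [hN]; erw [card_prod_subtype (fun a b => b ^ 2 = a ^ 2 + c)]
    push_cast
    rw [Finset.sum_congr rfl fun x _ => card_sq_eq hK (x ^ 2 + c)]
    rw [Finset.sum_add_distrib, Finset.sum_const, Finset.card_univ]
    push_cast
    ring
  have hge : 1 ≤ Fintype.card K := Fintype.card_pos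
  have : ((Fintype.card K - 1 : ℕ) : ℤ) = Fintype.card K - 1 := by
    push_cast [Nat.cast_sub hge]; ring
  rw [hcard, this] at h1
  linarith

omit [Field K] in
private lemma sum_quadChar_sq [Field K] [DecidableEq K] :
    ∑ x : K, quadraticChar K (x ^ 2) = (Fintype.card K : ℤ) - 1 := by
  have : ∀ x : K, quadraticChar K (x ^ 2) = if x = 0 then 0 else 1 := by
    intro x
    by_cases hx : x = 0
    · simp [hx]
    · simp [hx, quadraticChar_sq_one' hx]
  rw [Finset.sum_congr rfl fun x _ => this x,
    Finset.sum_ite, Finset.sum_const_zero, Finset.sum_const, zero_add]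
  have : (Finset.univ.filter fun x : K => ¬x = 0).card = Fintype.card K - 1 := by
    rw [Finset.filter_not, Finset.card_sdiff_of_subset (Finset.subset_univ _), Finset.card_univ,
      Finset.filter_eq', if_pos (Finset.mem_univ _), Finset.card_singleton]
  rw [this, nsmul_eq_mul, mul_one, Nat.cast_sub Fintype.card_pos, Nat.cast_one]

private lemma sum_quadChar_sub_sq (hK : ringChar K ≠ 2) (c : K) :
    ∑ x : K, quadraticChar K (c - x ^ 2)
      = quadraticChar K (-1) * (if c = 0 then (Fintype.card K : ℤ) - 1 else -1) := by
  have key : ∀ x : K, quadraticChar K (c - x ^ 2)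
      = quadraticChar K (-1) * quadraticChar K (x ^ 2 + -c) := by
    intro x
    rw [← map_mul]
    congr 1
    ring
  rw [Finset.sum_congr rfl fun x _ => key x, ← Finset.mul_sum]
  by_cases hc : c = 0
  · rw [if_pos hc]
    congr 1
    rw [Finset.sum_congr rfl fun x _ => by rw [hc, neg_zero, add_zero], sum_quadChar_sq]
  · rw [if_neg hc, sum_quadChar_sq_add hK (neg_ne_zero.mpr hc)]

private lemma sum_sum_quadChar (hK : ringChar K ≠ 2) (t : K) :
    ∑ b : K, ∑ c : K, quadraticChar K (t - b ^ 2 - c ^ 2)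
      = quadraticChar K (-1) * quadraticChar K t * Fintype.card K := by
  have inner : ∀ b : K, ∑ c : K, quadraticChar K (t - b ^ 2 - c ^ 2)
      = quadraticChar K (-1) * (if t - b ^ 2 = 0 then (Fintype.card K : ℤ) - 1 else -1) := by
    intro b
    exact sum_quadChar_sub_sq hK (t - b ^ 2)
  rw [Finset.sum_congr rfl fun b _ => inner b, ← Finset.mul_sum]
  have step : ∀ b : K, (if t - b ^ 2 = 0 then (Fintype.card K : ℤ) - 1 else -1)
      = (if b ^ 2 = t then (Fintype.card K : ℤ) else 0) - 1 := by
    intro b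
    by_cases h : b ^ 2 = t
    · rw [if_pos (by rw [h, sub_self]), if_pos h]
    · rw [if_neg (fun hh => h (by linear_combination -hh)), if_neg h, zero_sub]
  rw [Finset.sum_congr rfl fun b _ => step b, Finset.sum_sub_distrib, Finset.sum_const,
    Finset.card_univ, Finset.sum_ite, Finset.sum_const_zero, Finset.sum_const, add_zero]
  have hcardsq : ((Finset.univ.filter fun b : K => b ^ 2 = t).card : ℤ)
      = quadraticChar K t + 1 := by
    rw [← Fintype.card_subtype]
    exact card_sq_eq hK t
  rw [nsmul_eq_mul, nsmul_eq_mul, mul_one]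
  rw [show ((Finset.univ.filter fun b : K => b ^ 2 = t).card : ℤ) * (Fintype.card K : ℤ)
    = (quadraticChar K t + 1) * (Fintype.card K : ℤ) from by rw [hcardsq]]
  ring

private lemma card_three_squares (hK : ringChar K ≠ 2) {t : K}
    (hsq : quadraticChar K (-1) * quadraticChar K t = 1) :
    (Fintype.card {v : K × K × K // v.1 ^ 2 + v.2.1 ^ 2 + v.2.2 ^ 2 = t} : ℤ)
      = (Fintype.card K : ℤ) ^ 2 + Fintype.card K := by
  have e1 : {v : K × K × K // v.1 ^ 2 + v.2.1 ^ 2 + v.2.2 ^ 2 = t}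
      ≃ Σ b : K, {w : K × K // b ^ 2 + w.1 ^ 2 + w.2 ^ 2 = t} :=
    Equiv.subtypeProdEquivSigmaSubtype fun (b : K) (w : K × K) =>
      b ^ 2 + w.1 ^ 2 + w.2 ^ 2 = t
  rw [Fintype.card_congr e1, Fintype.card_sigma]
  have e2 : ∀ b : K, Fintype.card {w : K × K // b ^ 2 + w.1 ^ 2 + w.2 ^ 2 = t}
      = ∑ c : K, Fintype.card {d : K // d ^ 2 = t - b ^ 2 - c ^ 2} := by
    intro b
    rw [card_prod_subtype fun c d => b ^ 2 + c ^ 2 + d ^ 2 = t]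
    refine Finset.sum_congr rfl fun c _ => Fintype.card_congr (Equiv.subtypeEquivRight ?_)
    intro d
    constructor
    · intro h; linear_combination h
    · intro h; linear_combination h
  push_cast
  rw [Finset.sum_congr rfl fun b _ => by rw [e2 b]]
  push_cast
  rw [Finset.sum_congr rfl fun b (_ : b ∈ Finset.univ) =>
    Finset.sum_congr rfl fun c (_ : c ∈ Finset.univ) => card_sq_eq hK (t - b ^ 2 - c ^ 2)]
  have inner : ∀ b : K, ∑ c : K, (quadraticChar K (t - b ^ 2 - c ^ 2) + 1)
      = (∑ c : K, quadraticChar K (t - b ^ 2 - c ^ 2)) + (Fintype.card K : ℤ) := by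
    intro b
    rw [Finset.sum_add_distrib, Finset.sum_const, Finset.card_univ, nsmul_eq_mul, mul_one]
  rw [Finset.sum_congr rfl fun b (_ : b ∈ Finset.univ) => inner b, Finset.sum_add_distrib,
    Finset.sum_const, Finset.card_univ, nsmul_eq_mul, sum_sum_quadChar hK t, hsq, one_mul]
  ring

end Aux

/-- For an odd prime power `q`, the quaternion ring `H(F_q)` (isomorphic to
`M₂(F_q)`) has exactly `q^2 + q + 2` idempotent elements. -/
theorem quaternion_card_idempotents (q : ℕ) (hq : Odd q)
    (F : Type) [Field F] [Fintype F] (hF : Fintype.card F = q) :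
    Nat.card {x : ℍ[F] // IsIdempotentElem x} = q ^ 2 + q + 2 := by
  classical
  -- the characteristic is odd
  have hK : ringChar F ≠ 2 := by
    intro h
    have := FiniteField.even_card_of_char_two h
    rw [hF] at this
    obtain ⟨k, hk⟩ := hq
    omega
  have h2 : (2 : F) ≠ 0 := Ring.two_ne_zero hK
  set t : F := (2 : F)⁻¹ ^ 2 - (2 : F)⁻¹ with ht_def
  have h4t : (4 : F) * t = -1 := by
    rw [ht_def]; field_simp; ring
  have ht : t ≠ 0 := by
    intro h
    rw [h, mul_zero] at h4t
    exact one_ne_zero (neg_eq_zero.mp h4t.symm)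
  have hsq : quadraticChar F (-1) * quadraticChar F t = 1 := by
    rw [← map_mul]
    have : (-1 : F) * t = ((2 : F)⁻¹) ^ 2 := by
      rw [ht_def]
      field_simp
      ring
    rw [this, quadraticChar_sq_one' (inv_ne_zero h2)]
  -- a Fintype instance for the quaternions
  letI : Fintype ℍ[F] := Fintype.ofEquiv _ (QuaternionAlgebra.equivProd (-1 : F) 0 (-1)).symm
  -- characterize idempotents componentwise
  have hiff : ∀ x : ℍ[F], IsIdempotentElem x ↔
      ((x.imI = 0 ∧ x.imJ = 0 ∧ x.imK = 0) ∧ x.re ^ 2 = x.re) ∨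
      (x.re = (2 : F)⁻¹ ∧ x.imI ^ 2 + x.imJ ^ 2 + x.imK ^ 2 = t) := by
    intro x
    rw [IsIdempotentElem, Quaternion.ext_iff]
    rw [Quaternion.re_mul, Quaternion.imI_mul,
      Quaternion.imJ_mul, Quaternion.imK_mul]
    constructor
    · rintro ⟨hre, hi, hj, hk⟩
      by_cases hb : x.imI = 0 ∧ x.imJ = 0 ∧ x.imK = 0
      · exact Or.inl ⟨hb, by obtain ⟨h1, h2, h3⟩ := hb; linear_combination hre
          + x.imI * h1 + x.imJ * h2 + x.imK * h3⟩
      · have ha : x.re = (2 : F)⁻¹ := by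
          rcases not_and_or.mp hb with h | h
          · have : (2 * x.re - 1) * x.imI = 0 := by linear_combination hi
            rcases mul_eq_zero.mp this with h' | h'
            · field_simp; linear_combination h'
            · exact absurd h' h
          rcases not_and_or.mp h with h | h
          · have : (2 * x.re - 1) * x.imJ = 0 := by linear_combination hj
            rcases mul_eq_zero.mp this with h' | h'
            · field_simp; linear_combination h'
            · exact absurd h' h
          · have : (2 * x.re - 1) * x.imK = 0 := by linear_combination hk
            rcases mul_eq_zero.mp this with h' | h'
            · field_simp; linear_combination h'
            · exact absurd h' h
        refine Or.inr ⟨ha, ?_⟩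
        rw [ht_def, ← ha]
        linear_combination -hre
    · rintro (⟨⟨h1, h2, h3⟩, hre⟩ | ⟨ha, hquad⟩)
      · refine ⟨?_, ?_, ?_, ?_⟩ <;>
          simp only [h1, h2, h3] <;> ring_nf <;> linear_combination hre
      · have h2a : 2 * x.re = 1 := by rw [ha]; field_simp
        refine ⟨?_, ?_, ?_, ?_⟩
        · rw [ht_def, ← ha] at hquad
          linear_combination -hquad
        · linear_combination x.imI * h2a
        · linear_combination x.imJ * h2a
        · linear_combination x.imK * h2a
  rw [Nat.card_eq_fintype_card]
  have e : {x : ℍ[F] // IsIdempotentElem x} ≃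
      {p : F × F × F × F // ((p.2.1 = 0 ∧ p.2.2.1 = 0 ∧ p.2.2.2 = 0) ∧ p.1 ^ 2 = p.1) ∨
        (p.1 = (2 : F)⁻¹ ∧ p.2.1 ^ 2 + p.2.2.1 ^ 2 + p.2.2.2 ^ 2 = t)} :=
    Equiv.subtypeEquiv (QuaternionAlgebra.equivProd (-1) 0 (-1)) (fun x => by
      rw [hiff x]; rfl)
  rw [Fintype.card_congr e]
  have hdisj : Disjoint
      (fun p : F × F × F × F =>
        (p.2.1 = 0 ∧ p.2.2.1 = 0 ∧ p.2.2.2 = 0) ∧ p.1 ^ 2 = p.1)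
      (fun p : F × F × F × F =>
        p.1 = (2 : F)⁻¹ ∧ p.2.1 ^ 2 + p.2.2.1 ^ 2 + p.2.2.2 ^ 2 = t) := by
    refine disjoint_iff_inf_le.mpr fun p hp => ?_
    obtain ⟨⟨⟨h1, h2', h3⟩, _⟩, ⟨_, hquad⟩⟩ := hp
    rw [h1, h2', h3] at hquad
    apply ht
    rw [← hquad]
    ring
  rw [Fintype.card_subtype_or_disjoint _ _ hdisj]
  have e1 : {p : F × F × F × F //
      (p.2.1 = 0 ∧ p.2.2.1 = 0 ∧ p.2.2.2 = 0) ∧ p.1 ^ 2 = p.1} ≃ {a : F // a ^ 2 = a} :=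
    { toFun := fun p => ⟨p.1.1, p.2.2⟩
      invFun := fun a => ⟨(a.1, 0, 0, 0), ⟨⟨rfl, rfl, rfl⟩, a.2⟩⟩
      left_inv := fun p => by
        obtain ⟨⟨a, b, c, d⟩, ⟨⟨h1, h2', h3⟩, h⟩⟩ := p
        simp only at h1 h2' h3
        subst h1; subst h2'; subst h3
        rfl
      right_inv := fun a => rfl }
  have e2 : {p : F × F × F × F //
      p.1 = (2 : F)⁻¹ ∧ p.2.1 ^ 2 + p.2.2.1 ^ 2 + p.2.2.2 ^ 2 = t}
      ≃ {v : F × F × F // v.1 ^ 2 + v.2.1 ^ 2 + v.2.2 ^ 2 = t} :=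
    { toFun := fun p => ⟨p.1.2, p.2.2⟩
      invFun := fun v => ⟨((2 : F)⁻¹, v.1), ⟨rfl, v.2⟩⟩
      left_inv := fun p => by
        obtain ⟨⟨a, v⟩, ⟨ha, hv⟩⟩ := p
        simp only at ha
        subst ha
        rfl
      right_inv := fun v => rfl }
  rw [Fintype.card_congr e1, Fintype.card_congr e2]
  have hcard1 : Fintype.card {a : F // a ^ 2 = a} = 2 := by
    have hiff2 : ∀ a : F, a ^ 2 = a ↔ a = 0 ∨ a = 1 := by
      intro a
      constructor
      · intro h
        rcases mul_eq_zero.mp (show a * (a - 1) = 0 by linear_combination h) with h' | h'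
        · exact Or.inl h'
        · exact Or.inr (by linear_combination h')
      · rintro (rfl | rfl) <;> ring
    rw [Fintype.card_congr (Equiv.subtypeEquivRight hiff2),
      Fintype.card_subtype_or_disjoint _ _
        (disjoint_iff_inf_le.mpr fun a ha => one_ne_zero (ha.2 ▸ ha.1)),
      Fintype.card_subtype_eq, Fintype.card_subtype_eq]
  have hcard2 : Fintype.card {v : F × F × F // v.1 ^ 2 + v.2.1 ^ 2 + v.2.2 ^ 2 = t}
      = q ^ 2 + q := by
    have := card_three_squares hK hsq
    rw [hF] at this
    exact_mod_cast this
  rw [hcard1, hcard2]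
  ring
end

section
/- Let R be a finite Frobenius ring with a unique minimal left ideal I. Then any homogeneous weight w on R with average value Gamma satisfies: w(0)=0, w(x) = Gamma * |I|/(|I|-1) for all nonzero x in I, and w(x) = Gamma for all x not in I. -/
open scoped Quaternion

/-- The average of a weight `w` over an ideal `I` of `R`. -/
noncomputable def idealAvg {R : Type} [Ring R] (w : R → ℝ) (I : Ideal R) : ℝ :=
  (∑ᶠ y ∈ (I : Set R), w y) / (Nat.card I)

/-- `w` is a left homogeneous weight on `R` with average value `Γ`:
`w 0 = 0`, `w` is constant on generators of equal principal left ideals, and the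
average of `w` over every nonzero principal left ideal equals `Γ`. -/
def IsLeftHomogeneousWeight {R : Type} [Ring R] (w : R → ℝ) (Γ : ℝ) : Prop :=
  w 0 = 0 ∧ (∀ x y : R, Ideal.span {x} = Ideal.span {y} → w x = w y) ∧
    ∀ x : R, x ≠ 0 → idealAvg w (Ideal.span {x}) = Γ

section Aux
variable {R : Type} [Ring R] [Fintype R]

noncomputable def idealFinset (J : Ideal R) : Finset R :=
  (Set.toFinite (J : Set R)).toFinset

lemma mem_idealFinset {J : Ideal R} {x : R} : x ∈ idealFinset J ↔ x ∈ J := by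
  simp [idealFinset]

lemma card_idealFinset (J : Ideal R) : (idealFinset J).card = Nat.card J := by
  rw [show Nat.card J = Nat.card (J : Set R) from rfl, Nat.card_coe_set_eq,
    Set.ncard_eq_toFinset_card _ (Set.toFinite _), idealFinset]

lemma sum_idealFinset (w : R → ℝ) (J : Ideal R) :
    ∑ᶠ y ∈ (J : Set R), w y = ∑ y ∈ idealFinset J, w y := by
  rw [← finsum_mem_coe_finset, idealFinset, Set.Finite.coe_toFinset]

lemma natCard_lt_of_lt {K J : Ideal R} (h : K < J) : Nat.card K < Nat.card J := by
  rw [show Nat.card K = Nat.card (K : Set R) from rfl,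
    show Nat.card J = Nat.card (J : Set R) from rfl,
    Nat.card_coe_set_eq, Nat.card_coe_set_eq]
  refine Set.ncard_lt_ncard ?_ (Set.toFinite _)
  obtain ⟨hle, x, hxJ, hxK⟩ := SetLike.lt_iff_le_and_exists.mp h
  exact ⟨hle, fun h2 => hxK (h2 hxJ)⟩

lemma exists_min_le (J : Ideal R) (hJ : J ≠ ⊥) :
    ∃ K : Ideal R, K ≤ J ∧ K ≠ ⊥ ∧ ∀ L : Ideal R, L ≤ K → L = ⊥ ∨ L = K := by
  haveI : Finite (Ideal R) := Finite.of_injective (fun J => (J : Set R)) SetLike.coe_injective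
  obtain ⟨K, hK, hKJ⟩ := (IsAtomic.eq_bot_or_exists_atom_le J).resolve_left hJ
  exact ⟨K, hKJ, hK.1, fun L hL => (hL.lt_or_eq).imp (hK.2 L) id⟩

end Aux

/-- Let `R` be a finite Frobenius ring with a unique minimal left ideal `I`. Any
homogeneous weight `w` on `R` with average value `Γ` satisfies `w 0 = 0`,
`w x = Γ * |I| / (|I| - 1)` for nonzero `x ∈ I`, and `w x = Γ` for `x ∉ I`. -/
theorem homWeight_of_unique_minimal_ideal (R : Type) [Ring R] [Fintype R]
    (hR : IsFrobeniusRing R) (I : Ideal R) (hI : I ≠ ⊥)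
    (hmin : ∀ J : Ideal R, J ≤ I → J = ⊥ ∨ J = I)
    (huniq : ∀ J : Ideal R, J ≠ ⊥ → (∀ K : Ideal R, K ≤ J → K = ⊥ ∨ K = J) → J = I)
    (w : R → ℝ) (Γ : ℝ) (hw : IsLeftHomogeneousWeight w Γ) :
    w 0 = 0 ∧
    (∀ x ∈ I, x ≠ 0 → w x = Γ * (Nat.card I : ℝ) / ((Nat.card I : ℝ) - 1)) ∧
    (∀ x : R, x ∉ I → w x = Γ) := by
  classical
  obtain ⟨hw0, hconst, havg⟩ := hw
  -- every nonzero ideal contains I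
  have hIle : ∀ J : Ideal R, J ≠ ⊥ → I ≤ J := by
    intro J hJ
    obtain ⟨K, hKJ, hK0, hKmin⟩ := exists_min_le J hJ
    exact (huniq K hK0 hKmin) ▸ hKJ
  -- nonzero elements of I generate I
  have hspanI : ∀ x ∈ I, x ≠ 0 → Ideal.span {x} = I := by
    intro x hx hx0
    refine (hmin _ (Ideal.span_le.mpr (Set.singleton_subset_iff.mpr hx))).resolve_left ?_
    simpa [Ideal.span_singleton_eq_bot] using hx0
  -- sum over a principal ideal
  have hsum : ∀ x : R, x ≠ 0 →
      ∑ y ∈ idealFinset (Ideal.span {x}), w y = Γ * (Nat.card (Ideal.span {x} : Ideal R) : ℝ) := by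
    intro x hx
    have h := havg x hx
    unfold idealAvg at h
    have hpos : 0 < Nat.card (Ideal.span {x} : Ideal R) := by
      have : Nonempty (Ideal.span {x} : Ideal R) := ⟨0, zero_mem _⟩
      exact Nat.card_pos
    have hN : ((Nat.card (Ideal.span {x} : Ideal R)) : ℝ) ≠ 0 := by positivity
    rw [div_eq_iff hN] at h
    rw [← sum_idealFinset, h]
  obtain ⟨x0, hx0I, hx00⟩ := Submodule.exists_mem_ne_zero_of_ne_bot hI
  have hsumI : ∑ y ∈ idealFinset I, w y = Γ * (Nat.card I : ℝ) := by
    have := hsum x0 hx00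
    rwa [hspanI x0 hx0I hx00] at this
  have hcardI : 2 ≤ Nat.card I := by
    rw [← card_idealFinset]
    have hsub : ({0, x0} : Finset R) ⊆ idealFinset I := by
      intro y hy
      rcases Finset.mem_insert.mp hy with h | h
      · exact mem_idealFinset.mpr (h ▸ zero_mem I)
      · exact mem_idealFinset.mpr ((Finset.mem_singleton.mp h) ▸ hx0I)
    calc 2 = ({0, x0} : Finset R).card := (Finset.card_pair (Ne.symm hx00)).symm
      _ ≤ _ := Finset.card_le_card hsub
  -- value on I
  have hWI : ∀ x ∈ I, x ≠ 0 → w x = Γ * (Nat.card I : ℝ) / ((Nat.card I : ℝ) - 1) := by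
    intro x hx hx0
    have h0mem : (0 : R) ∈ idealFinset I := mem_idealFinset.mpr (zero_mem I)
    have hsplit : ∑ y ∈ (idealFinset I).erase 0, w y + w 0 = ∑ y ∈ idealFinset I, w y :=
      Finset.sum_erase_add _ _ h0mem
    have hcongr : ∑ y ∈ (idealFinset I).erase 0, w y = ((idealFinset I).erase 0).card * w x := by
      rw [Finset.sum_congr rfl (fun y hy => ?_), Finset.sum_const, nsmul_eq_mul]
      have hyI : y ∈ I := mem_idealFinset.mp (Finset.mem_of_mem_erase hy)
      have hy0 : y ≠ 0 := Finset.ne_of_mem_erase hy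
      exact hconst y x ((hspanI y hyI hy0).trans (hspanI x hx hx0).symm)
    have hce : ((idealFinset I).erase 0).card = Nat.card I - 1 := by
      rw [Finset.card_erase_of_mem h0mem, card_idealFinset]
    have hcast : (((idealFinset I).erase 0).card : ℝ) = (Nat.card I : ℝ) - 1 := by
      rw [hce, Nat.cast_sub (by omega)]; norm_num
    have heq : ((Nat.card I : ℝ) - 1) * w x = Γ * (Nat.card I : ℝ) := by
      rw [← hcast, ← hcongr]
      rw [hcongr] at hsplit ⊢
      rw [hcast] at hsplit ⊢
      linarith [hsumI, hsplit]
    have hne : (Nat.card I : ℝ) - 1 ≠ 0 := by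
      have : (2 : ℝ) ≤ (Nat.card I : ℝ) := by exact_mod_cast hcardI
      linarith
    rw [eq_div_iff hne]
    linarith [heq]
  refine ⟨hw0, hWI, ?_⟩
  -- off I by strong induction on card of span
  have key : ∀ n : ℕ, ∀ x : R, x ∉ I → Nat.card (Ideal.span {x} : Ideal R) = n → w x = Γ := by
    intro n
    induction n using Nat.strong_induction_on with
    | _ n ih =>
      intro x hxI hn
      have hx0 : x ≠ 0 := fun h => hxI (h ▸ zero_mem I)
      set J := Ideal.span ({x} : Set R) with hJdef
      have hxJ : x ∈ J := Ideal.subset_span rfl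
      have hJ0 : J ≠ ⊥ := by simpa [hJdef, Ideal.span_singleton_eq_bot] using hx0
      have hIJ : I ≤ J := hIle J hJ0
      have hJneI : ¬ J ≤ I := fun h => hxI (h hxJ)
      set s := idealFinset J with hsdef
      set P : R → Prop := fun y => Ideal.span ({y} : Set R) = J with hPdef
      set A := s.filter P with hAdef
      set B := s.filter (fun y => ¬ P y) with hBdef
      set B1 := B.filter (· ∈ I) with hB1def
      set B2 := B.filter (· ∉ I) with hB2def
      -- B1 = idealFinset I
      have hB1 : B1 = idealFinset I := by
        ext y
        constructor
        · intro hy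
          exact mem_idealFinset.mpr ((Finset.mem_filter.mp hy).2)
        · intro hy
          have hyI : y ∈ I := mem_idealFinset.mp hy
          refine Finset.mem_filter.mpr ⟨Finset.mem_filter.mpr ⟨mem_idealFinset.mpr (hIJ hyI), fun hP => ?_⟩, hyI⟩
          exact hJneI (hP ▸ Ideal.span_le.mpr (Set.singleton_subset_iff.mpr hyI))
      -- sums
      have hsA : ∑ y ∈ A, w y = (A.card : ℝ) * w x := by
        rw [Finset.sum_congr rfl (fun y hy => ?_), Finset.sum_const, nsmul_eq_mul]
        exact hconst y x ((Finset.mem_filter.mp hy).2)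
      have hsB2 : ∑ y ∈ B2, w y = (B2.card : ℝ) * Γ := by
        rw [Finset.sum_congr rfl (fun y hy => ?_), Finset.sum_const, nsmul_eq_mul]
        obtain ⟨hyB, hyI⟩ := Finset.mem_filter.mp hy
        obtain ⟨hys, hyP⟩ := Finset.mem_filter.mp hyB
        have hylt : Ideal.span ({y} : Set R) < J :=
          lt_of_le_of_ne (Ideal.span_le.mpr (Set.singleton_subset_iff.mpr (mem_idealFinset.mp hys))) hyP
        exact ih _ (hn ▸ natCard_lt_of_lt hylt) y hyI rfl
      have hsB1 : ∑ y ∈ B1, w y = Γ * (Nat.card I : ℝ) := by rw [hB1]; exact hsumI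
      have hsB : ∑ y ∈ B, w y = Γ * (Nat.card I : ℝ) + (B2.card : ℝ) * Γ := by
        rw [← Finset.sum_filter_add_sum_filter_not B (· ∈ I), ← hB1def, ← hB2def, hsB1, hsB2]
      have hstot : ∑ y ∈ s, w y = Γ * (Nat.card J : ℝ) := hsum x hx0
      have hsplit : ∑ y ∈ A, w y + ∑ y ∈ B, w y = ∑ y ∈ s, w y := by
        rw [hAdef, hBdef]; exact Finset.sum_filter_add_sum_filter_not s P w
      -- cardinalities
      have hcs : A.card + B.card = s.card := by
        rw [hAdef, hBdef]; exact Finset.card_filter_add_card_filter_not P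
      have hcB : B1.card + B2.card = B.card := by
        rw [hB1def, hB2def]; exact Finset.card_filter_add_card_filter_not _
      have hcB1 : B1.card = Nat.card I := by rw [hB1, card_idealFinset]
      have hcsJ : s.card = Nat.card J := card_idealFinset J
      have hcount : (Nat.card J : ℝ) = (A.card : ℝ) + (Nat.card I : ℝ) + (B2.card : ℝ) := by
        have h1 : A.card + (Nat.card I + B2.card) = Nat.card J := by
          rw [← hcB1, hcB, hcs, hcsJ]
        have h2 : Nat.card J = A.card + Nat.card I + B2.card := by omega
        rw [h2]; push_cast; ring
      have hAx : x ∈ A := Finset.mem_filter.mpr ⟨mem_idealFinset.mpr hxJ, rfl⟩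
      have hA0 : (A.card : ℝ) ≠ 0 := by
        have : 0 < A.card := Finset.card_pos.mpr ⟨x, hAx⟩
        exact_mod_cast this.ne'
      have hmain : (A.card : ℝ) * w x = (A.card : ℝ) * Γ := by
        have e1 : (A.card : ℝ) * w x + (Γ * (Nat.card I : ℝ) + (B2.card : ℝ) * Γ)
            = Γ * ((A.card : ℝ) + (Nat.card I : ℝ) + (B2.card : ℝ)) := by
          rw [← hcount, ← hsA, ← hsB, hsplit, hstot]
        linear_combination e1
      exact mul_left_cancel₀ hA0 hmain
  exact fun x hx => key _ x hx rfl
end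

section
/- Let R be a finite ring and I a minimal left ideal of R. If w is a left homogeneous weight on R with average value Gamma, then w takes the common value Gamma * |I|/(|I|-1) on all nonzero elements of I. -/
/-- If `I` is a minimal left ideal of a finite ring `R` and `w` is a left homogeneous
weight on `R` with average value `Γ`, then `w` takes the common value
`Γ * |I| / (|I| - 1)` on all nonzero elements of `I`. -/
theorem homWeight_on_minimal_ideal (R : Type) [Ring R] [Fintype R]
    (I : Ideal R) (hI : I ≠ ⊥)
    (hmin : ∀ J : Ideal R, J ≤ I → J = ⊥ ∨ J = I)
    (w : R → ℝ) (Γ : ℝ) (hw : IsLeftHomogeneousWeight w Γ) :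
    ∀ x ∈ I, x ≠ 0 → w x = Γ * (Nat.card I : ℝ) / ((Nat.card I : ℝ) - 1) := by
  classical
  obtain ⟨hw0, hwconst, hwavg⟩ := hw
  -- every nonzero element of I generates I
  have hspan : ∀ x ∈ I, x ≠ 0 → Ideal.span {x} = I := by
    intro x hx hx0
    have hle : Ideal.span ({x} : Set R) ≤ I := by
      rw [Ideal.span_le]; simpa using hx
    rcases hmin _ hle with h | h
    · exact absurd (by simpa using (Ideal.span_singleton_eq_bot.mp h)) hx0
    · exact h
  intro x hx hx0
  -- w is constant (= w x) on nonzero elements of I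
  have hconst : ∀ y ∈ I, y ≠ 0 → w y = w x := by
    intro y hy hy0
    exact hwconst y x ((hspan y hy hy0).trans (hspan x hx hx0).symm)
  -- the average over I is Γ
  have havg : idealAvg w I = Γ := by
    rw [← hspan x hx hx0]; exact hwavg x hx0
  -- set up the finset
  set S : Finset R := (I : Set R).toFinset with hS
  have hmemS : ∀ y : R, y ∈ S ↔ y ∈ I := by
    intro y; simp [hS]
  have hsum : ∑ᶠ y ∈ (I : Set R), w y = ∑ y ∈ S, w y := by
    rw [hS, ← finsum_mem_coe_finset]
    simp
  have h0S : (0 : R) ∈ S := (hmemS 0).mpr I.zero_mem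
  have hxS : x ∈ S := (hmemS x).mpr hx
  have hcard : (Nat.card I : ℝ) = (S.card : ℝ) := by
    have : Nat.card I = S.card := by
      rw [Nat.card_eq_fintype_card, hS, Set.toFinset_card]
      exact (Fintype.card_congr (Equiv.refl _))
    rw [this]
  -- compute the sum
  have hsumval : ∑ y ∈ S, w y = (S.card - 1 : ℝ) * w x := by
    rw [← Finset.add_sum_erase _ _ h0S, hw0, zero_add]
    have : ∀ y ∈ S.erase 0, w y = w x := by
      intro y hy
      obtain ⟨hy0, hyS⟩ := Finset.mem_erase.mp hy
      exact hconst y ((hmemS y).mp hyS) hy0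
    rw [Finset.sum_congr rfl this, Finset.sum_const, nsmul_eq_mul,
      Finset.card_erase_of_mem h0S]
    have h1 : 1 ≤ S.card := Finset.card_pos.mpr ⟨0, h0S⟩
    push_cast [h1]
    ring
  have hcard2 : 2 ≤ S.card := by
    have : ({0, x} : Finset R) ⊆ S := by
      intro y hy
      rcases Finset.mem_insert.mp hy with h | h
      · rwa [h]
      · rw [Finset.mem_singleton.mp h]; exact hxS
    calc 2 = ({0, x} : Finset R).card := by
            rw [Finset.card_insert_of_notMem (by simpa using hx0.symm),
              Finset.card_singleton]
         _ ≤ S.card := Finset.card_le_card this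
  have hn0 : (S.card : ℝ) ≠ 0 := by positivity
  have hn1 : (S.card : ℝ) - 1 ≠ 0 := by
    have : (2 : ℝ) ≤ (S.card : ℝ) := by exact_mod_cast hcard2
    linarith
  rw [idealAvg, hsum, hsumval, hcard] at havg
  rw [hcard]
  field_simp at havg ⊢
  linarith [havg]
end

section
/- In the quaternion ring H(F_{2^m}) over the field with 2^m elements, the set x * F_{2^m} with x = 1 + i + j + k is a two-sided ideal equal to the two-sided ideal generated by x, it has exactly 2^m elements, and it is the unique minimal ideal of H(F_{2^m}) (it is contained in every nonzero ideal). -/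
open scoped Quaternion


section aux
variable {F : Type*} [Field F] [CharP F 2]

theorem aux_xmul (x : ℍ[F]) (hx : x = ⟨1,1,1,1⟩) (q : ℍ[F]) :
    x * q = x * algebraMap F _ (q.re + q.imI + q.imJ + q.imK) := by
  have h2 : (2:F) = 0 := by exact_mod_cast CharP.cast_eq_zero F 2
  have hx := QuaternionAlgebra.ext_iff.1 hx
  ext <;> simp [Quaternion.re_mul, Quaternion.imI_mul, Quaternion.imJ_mul, Quaternion.imK_mul,
    QuaternionAlgebra.coe_algebraMap, hx] <;>
    first
      | linear_combination (-(q.imI+q.imJ+q.imK))*h2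
      | linear_combination (-q.imJ)*h2
      | linear_combination (-q.imK)*h2
      | linear_combination (-q.imI)*h2

theorem aux_mulx (x : ℍ[F]) (hx : x = ⟨1,1,1,1⟩) (q : ℍ[F]) :
    q * x = x * algebraMap F _ (q.re + q.imI + q.imJ + q.imK) := by
  have h2 : (2:F) = 0 := by exact_mod_cast CharP.cast_eq_zero F 2
  have hx := QuaternionAlgebra.ext_iff.1 hx
  ext <;> simp [Quaternion.re_mul, Quaternion.imI_mul, Quaternion.imJ_mul, Quaternion.imK_mul,
    QuaternionAlgebra.coe_algebraMap, hx] <;>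
    first
      | linear_combination (-(q.imI+q.imJ+q.imK))*h2
      | linear_combination (-q.imJ)*h2
      | linear_combination (-q.imK)*h2
      | linear_combination (-q.imI)*h2

theorem aux_vq (x v : ℍ[F]) (hx : x = ⟨1,1,1,1⟩) (hv : v = ⟨1,0,1,0⟩) (q : ℍ[F])
    (h : q.re + q.imI + q.imJ + q.imK = 0) :
    v * q = x * algebraMap F _ (q.imI + q.imK) := by
  have h2 : (2:F) = 0 := by exact_mod_cast CharP.cast_eq_zero F 2
  have hx := QuaternionAlgebra.ext_iff.1 hx; have hv := QuaternionAlgebra.ext_iff.1 hv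
  ext <;> simp [Quaternion.re_mul, Quaternion.imI_mul, Quaternion.imJ_mul, Quaternion.imK_mul,
    QuaternionAlgebra.coe_algebraMap, hx, hv] <;>
    first
      | linear_combination h - (q.imI+q.imJ+q.imK)*h2
      | linear_combination (-q.imI)*h2
      | linear_combination h - (q.imJ+q.imI+q.imK)*h2
      | linear_combination (-q.imK)*h2
      | linear_combination h
      | linear_combination -h
      | linear_combination h - q.imI*h2
      | linear_combination h - q.imJ*h2
      | linear_combination h - q.imK*h2
      | linear_combination h - q.imK*h2 - q.imI*h2

theorem aux_uq (x u : ℍ[F]) (hx : x = ⟨1,1,1,1⟩) (hu : u = ⟨1,1,0,0⟩) (q : ℍ[F])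
    (h : q.re + q.imI + q.imJ + q.imK = 0) (hb : q.imI + q.imK = 0) :
    u * q = x * algebraMap F _ (q.imJ + q.imK) := by
  have h2 : (2:F) = 0 := by exact_mod_cast CharP.cast_eq_zero F 2
  have hx := QuaternionAlgebra.ext_iff.1 hx; have hu := QuaternionAlgebra.ext_iff.1 hu
  ext <;> simp [Quaternion.re_mul, Quaternion.imI_mul, Quaternion.imJ_mul, Quaternion.imK_mul,
    QuaternionAlgebra.coe_algebraMap, hx, hu] <;>
    first
      | linear_combination h + hb - (q.imI+q.imJ+q.imK)*h2
      | linear_combination h - hb - (q.imJ)*h2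
      | linear_combination (-q.imJ)*h2
      | linear_combination (-q.imK)*h2
      | linear_combination hb
      | linear_combination -hb
      | linear_combination hb - q.imK*h2
      | linear_combination h + hb
      | linear_combination h - hb
      | linear_combination h - (q.imI+q.imJ+q.imK)*h2
      | linear_combination h - (q.imJ+q.imK)*h2
      | ring1
      | linear_combination h

theorem aux_dq (x : ℍ[F]) (hx : x = ⟨1,1,1,1⟩) (q : ℍ[F])
    (h : q.re + q.imI + q.imJ + q.imK = 0) (hb : q.imI + q.imK = 0)
    (hc : q.imJ + q.imK = 0) :
    q = x * algebraMap F _ q.imK := by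
  have h2 : (2:F) = 0 := by exact_mod_cast CharP.cast_eq_zero F 2
  have hx := QuaternionAlgebra.ext_iff.1 hx
  ext <;> simp [Quaternion.re_mul, Quaternion.imI_mul, Quaternion.imJ_mul, Quaternion.imK_mul,
    QuaternionAlgebra.coe_algebraMap, hx] <;>
    first
      | linear_combination h - hb - hc + q.imK*h2
      | linear_combination hb - q.imK*h2
      | linear_combination hc - q.imK*h2
      | linear_combination h - hb - hc
      | linear_combination hb
      | linear_combination hc
      | rfl

theorem aux_re (x : ℍ[F]) (hx : x = ⟨1,1,1,1⟩) (c : F) :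
    (x * algebraMap F _ c).re = c := by
  have hx := QuaternionAlgebra.ext_iff.1 hx
  simp [Quaternion.re_mul, QuaternionAlgebra.coe_algebraMap, hx]

end aux


/-- In `H(F_{2^m})`, the set `x·F_{2^m}` with `x = 1 + i + j + k` equals the two-sided
ideal generated by `x`, has exactly `2^m` elements, and is the unique minimal ideal:
it is contained in every nonzero two-sided ideal. -/
theorem quaternion_char_two_minimal_ideal (m : ℕ) (hm : 0 < m) :
    ∀ (x : ℍ[GaloisField 2 m]), x = ⟨1, 1, 1, 1⟩ →
    ∀ (S : Set ℍ[GaloisField 2 m]),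
      S = {y | ∃ c : GaloisField 2 m, y = x * algebraMap (GaloisField 2 m) _ c} →
      (TwoSidedIdeal.span {x} : Set ℍ[GaloisField 2 m]) = S ∧
      Nat.card S = 2 ^ m ∧
      ∀ J : TwoSidedIdeal ℍ[GaloisField 2 m], J ≠ ⊥ → ∀ y ∈ S, y ∈ J := by
  intro x hx S hS
  set F := GaloisField 2 m with hF
  haveI : CharP F 2 := inferInstance
  -- S as an ideal
  have hSmem : ∀ y, y ∈ S ↔ ∃ c : F, y = x * algebraMap F _ c := by
    intro y; rw [hS]; rfl
  let I : TwoSidedIdeal ℍ[F] := TwoSidedIdeal.mk' S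
    (by rw [hSmem]; exact ⟨0, by simp⟩)
    (by intro a b ha hb
        rw [hSmem] at ha hb ⊢
        obtain ⟨c, rfl⟩ := ha; obtain ⟨d, rfl⟩ := hb
        exact ⟨c + d, by rw [map_add, mul_add]⟩)
    (by intro a ha
        rw [hSmem] at ha ⊢
        obtain ⟨c, rfl⟩ := ha
        exact ⟨-c, by rw [map_neg, mul_neg]⟩)
    (by intro a b hb
        rw [hSmem] at hb ⊢
        obtain ⟨c, rfl⟩ := hb
        refine ⟨(a.re + a.imI + a.imJ + a.imK) * c, ?_⟩
        rw [← mul_assoc, aux_mulx x hx a, map_mul, mul_assoc])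
    (by intro a b ha
        rw [hSmem] at ha ⊢
        obtain ⟨c, rfl⟩ := ha
        refine ⟨(b.re + b.imI + b.imJ + b.imK) * c, ?_⟩
        rw [mul_assoc, Algebra.commutes c b, ← mul_assoc, aux_xmul x hx b, mul_assoc, ← map_mul])
  have hxS : x ∈ S := by rw [hSmem]; exact ⟨1, by simp⟩
  refine ⟨?_, ?_, ?_⟩
  · -- span {x} = S
    apply subset_antisymm
    · intro y hy
      rw [SetLike.mem_coe, TwoSidedIdeal.mem_span_iff] at hy
      have := hy I (by intro z hz; rw [Set.mem_singleton_iff] at hz; subst hz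
                       exact (TwoSidedIdeal.mem_mk' _ _ _ _ _ _ _).2 hxS)
      rwa [TwoSidedIdeal.mem_mk'] at this
    · intro y hy
      rw [hSmem] at hy
      obtain ⟨c, rfl⟩ := hy
      exact SetLike.mem_coe.2 <|
        TwoSidedIdeal.mul_mem_right _ _ _ (TwoSidedIdeal.subset_span rfl)
  · -- cardinality
    have hinj : Function.Injective (fun c : F => x * algebraMap F ℍ[F] c) := by
      intro a b hab
      have := congrArg QuaternionAlgebra.re hab
      rwa [aux_re x hx, aux_re x hx] at this
    have hrange : S = Set.range (fun c : F => x * algebraMap F ℍ[F] c) := by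
      ext y; rw [hSmem]; simp [Set.range, eq_comm]; rfl
    rw [hrange, Nat.card_range_of_injective hinj, hF, GaloisField.card 2 m hm.ne']
  · -- minimality
    intro J hJ y hy
    rw [hSmem] at hy
    obtain ⟨c, rfl⟩ := hy
    -- find a nonzero element of J
    have : ∃ q : ℍ[F], q ∈ J ∧ q ≠ 0 := by
      by_contra h
      push_neg at h
      exact hJ (le_antisymm (fun z hz => (TwoSidedIdeal.mem_bot _).2 (by
        by_contra hz0; exact hz0 (h z hz))) bot_le)
    obtain ⟨q, hqJ, hq0⟩ := this
    -- it suffices to show x ∈ J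
    suffices hxJ : x ∈ J by exact TwoSidedIdeal.mul_mem_right _ _ _ hxJ
    by_cases h : q.re + q.imI + q.imJ + q.imK = 0
    · by_cases hb : q.imI + q.imK = 0
      · by_cases hc : q.imJ + q.imK = 0
        · -- q = x * ⟦q.imK⟧ with q.imK ≠ 0
          have hq := aux_dq x hx q h hb hc
          have hk : q.imK ≠ 0 := by
            intro h0; apply hq0; rw [hq, h0, map_zero, mul_zero]
          generalize hd : q.imK = d at hq hk
          have : q * algebraMap F ℍ[F] d⁻¹ ∈ J := TwoSidedIdeal.mul_mem_right _ _ _ hqJ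
          rwa [hq, mul_assoc, ← map_mul, mul_inv_cancel₀ hk, map_one, mul_one] at this
        · obtain ⟨u, hu⟩ : ∃ u : ℍ[F], u = ⟨1,1,0,0⟩ := ⟨_, rfl⟩
          have hq := aux_uq x u hx hu q h hb
          have : u * q * algebraMap F ℍ[F] (q.imJ + q.imK)⁻¹ ∈ J :=
            TwoSidedIdeal.mul_mem_right _ _ _ (TwoSidedIdeal.mul_mem_left _ _ _ hqJ)
          rwa [hq, mul_assoc, ← map_mul, mul_inv_cancel₀ hc, map_one, mul_one] at this
      · obtain ⟨v, hv⟩ : ∃ v : ℍ[F], v = ⟨1,0,1,0⟩ := ⟨_, rfl⟩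
        have hq := aux_vq x v hx hv q h
        have : v * q * algebraMap F ℍ[F] (q.imI + q.imK)⁻¹ ∈ J :=
          TwoSidedIdeal.mul_mem_right _ _ _ (TwoSidedIdeal.mul_mem_left _ _ _ hqJ)
        rwa [hq, mul_assoc, ← map_mul, mul_inv_cancel₀ hb, map_one, mul_one] at this
    · have hq := aux_xmul x hx q
      have : x * q * algebraMap F ℍ[F] (q.re + q.imI + q.imJ + q.imK)⁻¹ ∈ J :=
        TwoSidedIdeal.mul_mem_right _ _ _ (TwoSidedIdeal.mul_mem_left _ _ _ hqJ)
      rwa [hq, mul_assoc, ← map_mul, mul_inv_cancel₀ h, map_one, mul_one] at this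
end

section
/- In the quaternion ring H(Z_{2^r}) over the integers modulo 2^r with r > 1, the set {0, x} with x = 2^{r-1}(1 + i + j + k) is a two-sided ideal and is the unique minimal ideal of H(Z_{2^r}). -/
set_option linter.unreachableTactic false
set_option linter.unusedTactic false
set_option linter.unnecessarySeqFocus false

open scoped Quaternion

theorem qh_mul_mk (R : Type) [CommRing R] (q : ℍ[R]) (a b c d : R) :
    @HMul.hMul ℍ[R] ℍ[R] ℍ[R] _ q ⟨a,b,c,d⟩ = ⟨q.re * a - q.imI * b - q.imJ * c - q.imK * d,
      q.re * b + q.imI * a + q.imJ * d - q.imK * c,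
      q.re * c - q.imI * d + q.imJ * a + q.imK * b,
      q.re * d + q.imI * c - q.imJ * b + q.imK * a⟩ :=
  Quaternion.ext _ _ (Quaternion.re_mul q ⟨a,b,c,d⟩) (Quaternion.imI_mul q ⟨a,b,c,d⟩)
    (Quaternion.imJ_mul q ⟨a,b,c,d⟩) (Quaternion.imK_mul q ⟨a,b,c,d⟩)

theorem qh_mk_mul (R : Type) [CommRing R] (q : ℍ[R]) (a b c d : R) :
    @HMul.hMul ℍ[R] ℍ[R] ℍ[R] _ ⟨a,b,c,d⟩ q = ⟨a * q.re - b * q.imI - c * q.imJ - d * q.imK,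
      a * q.imI + b * q.re + c * q.imK - d * q.imJ,
      a * q.imJ - b * q.imK + c * q.re + d * q.imI,
      a * q.imK + b * q.imJ - c * q.imI + d * q.re⟩ :=
  Quaternion.ext _ _ (Quaternion.re_mul ⟨a,b,c,d⟩ q) (Quaternion.imI_mul ⟨a,b,c,d⟩ q)
    (Quaternion.imJ_mul ⟨a,b,c,d⟩ q) (Quaternion.imK_mul ⟨a,b,c,d⟩ q)

theorem qh_mk_mul_mk (R : Type) [CommRing R] (a b c d a' b' c' d' : R) :
    @HMul.hMul ℍ[R] ℍ[R] ℍ[R] _ ⟨a,b,c,d⟩ ⟨a',b',c',d'⟩ = ⟨a * a' - b * b' - c * c' - d * d',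
      a * b' + b * a' + c * d' - d * c',
      a * c' - b * d' + c * a' + d * b',
      a * d' + b * c' - c * b' + d * a'⟩ :=
  Quaternion.ext _ _ (Quaternion.re_mul ⟨a,b,c,d⟩ ⟨a',b',c',d'⟩)
    (Quaternion.imI_mul ⟨a,b,c,d⟩ ⟨a',b',c',d'⟩)
    (Quaternion.imJ_mul ⟨a,b,c,d⟩ ⟨a',b',c',d'⟩) (Quaternion.imK_mul ⟨a,b,c,d⟩ ⟨a',b',c',d'⟩)

theorem qh_smul_mk (R : Type) [CommRing R] (s a b c d : R) :
    @HSMul.hSMul R ℍ[R] ℍ[R] _ s ⟨a,b,c,d⟩ = ⟨s * a, s * b, s * c, s * d⟩ := rfl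

theorem qh_mk_add_mk (R : Type) [CommRing R] (a b c d a' b' c' d' : R) :
    @HAdd.hAdd ℍ[R] ℍ[R] ℍ[R] _ ⟨a,b,c,d⟩ ⟨a',b',c',d'⟩ = ⟨a + a', b + b', c + c', d + d'⟩ := rfl

theorem qh_neg_mk (R : Type) [CommRing R] (a b c d : R) :
    @Neg.neg ℍ[R] _ ⟨a,b,c,d⟩ = ⟨-a, -b, -c, -d⟩ := rfl

theorem aux_half (r : ℕ) (hr : 1 ≤ r) (e : ZMod (2^r)) (h : e + e = 0) :
    e = 0 ∨ e = (2:ZMod (2^r))^(r-1) := by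
  haveI : NeZero (2^r) := ⟨by positivity⟩
  have hv : ((2 * e.val : ℕ) : ZMod (2^r)) = 0 := by
    push_cast [ZMod.natCast_val, ZMod.cast_id]
    linear_combination h
  rw [ZMod.natCast_eq_zero_iff] at hv
  have h2 : (2:ℕ)^r = 2 * 2^(r-1) := by
    rw [← pow_succ']; congr 1; omega
  obtain ⟨k, hk⟩ := hv
  have hk' : 2 * e.val = 2 * (2^(r-1) * k) := by rw [hk, h2, mul_assoc]
  have hm : e.val = 2^(r-1) * k := Nat.eq_of_mul_eq_mul_left two_pos hk'
  have hlt : e.val < 2^r := ZMod.val_lt e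
  have hm2 : k < 2 := by
    by_contra hm2
    push_neg at hm2
    have : 2^(r-1) * 2 ≤ 2^(r-1) * k := Nat.mul_le_mul_left _ hm2
    rw [mul_comm 2 (2^(r-1))] at h2
    omega
  have he : e = ((e.val : ℕ) : ZMod (2^r)) := by
    rw [ZMod.natCast_val, ZMod.cast_id]
  interval_cases k
  · left; rw [he, hm]; simp
  · right; rw [he, hm]; push_cast; ring

theorem mulx (R : Type) [CommRing R] (c : R) (h2 : c * 2 = 0) (q x : ℍ[R])
    (hx : x = ⟨c,c,c,c⟩) :
    q * x = (q.re + q.imI + q.imJ + q.imK) • x := by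
  subst hx
  refine QuaternionAlgebra.ext ?_ ?_ ?_ ?_ <;>
    simp [qh_mul_mk, qh_mk_mul,
      qh_mk_mul_mk, qh_smul_mk]
  · linear_combination (-q.imI - q.imJ - q.imK) * h2
  · linear_combination (-q.imK) * h2
  · linear_combination (-q.imI) * h2
  · linear_combination (-q.imJ) * h2

theorem xmul (R : Type) [CommRing R] (c : R) (h2 : c * 2 = 0) (q x : ℍ[R])
    (hx : x = ⟨c,c,c,c⟩) :
    x * q = (q.re + q.imI + q.imJ + q.imK) • x := by
  subst hx
  refine QuaternionAlgebra.ext ?_ ?_ ?_ ?_ <;>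
    simp [qh_mul_mk, qh_mk_mul,
      qh_mk_mul_mk, qh_smul_mk]
  · linear_combination (-q.imI - q.imJ - q.imK) * h2
  · linear_combination (-q.imJ) * h2
  · linear_combination (-q.imK) * h2
  · linear_combination (-q.imI) * h2

theorem smulx (R : Type) [CommRing R] (c s : R) (x : ℍ[R]) (hx : x = ⟨c,c,c,c⟩) :
    s • x = ⟨c*s, c*s, c*s, c*s⟩ := by
  subst hx
  refine QuaternionAlgebra.ext ?_ ?_ ?_ ?_ <;> simp [mul_comm, qh_smul_mk]

theorem aux_cases (R : Type) [CommRing R] (c : R) (h2 : c * 2 = 0) (x y : ℍ[R])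
    (hx : x = ⟨c,c,c,c⟩)
    (ha : y.re = 0 ∨ y.re = c) (hb : y.imI = 0 ∨ y.imI = c)
    (hc : y.imJ = 0 ∨ y.imJ = c) (hd : y.imK = 0 ∨ y.imK = c)
    (hy : y ≠ 0) : ∃ z : ℍ[R], y * z = x := by
  subst hx
  obtain ⟨a, b, e, d⟩ := y
  have ha' : a = 0 ∨ a = c := ha
  have hb' : b = 0 ∨ b = c := hb
  have he' : e = 0 ∨ e = c := hc
  have hd' : d = 0 ∨ d = c := hd
  clear ha hb hc hd
  rcases ha' with rfl | rfl <;> rcases hb' with rfl | rfl <;>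
    rcases he' with rfl | rfl <;> rcases hd' with rfl | rfl
  · exact absurd rfl hy
  · exact ⟨⟨1,1,1,1⟩, by refine QuaternionAlgebra.ext ?_ ?_ ?_ ?_ <;>
      simp [qh_mul_mk, qh_mk_mul,
        qh_mk_mul_mk, qh_smul_mk] <;>
      first | ring1 | linear_combination h2 | linear_combination -h2 |
        linear_combination 2*h2 | linear_combination -2*h2⟩
  · exact ⟨⟨1,1,1,1⟩, by refine QuaternionAlgebra.ext ?_ ?_ ?_ ?_ <;>
      simp [qh_mul_mk, qh_mk_mul,
        qh_mk_mul_mk, qh_smul_mk] <;>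
      first | ring1 | linear_combination h2 | linear_combination -h2 |
        linear_combination 2*h2 | linear_combination -2*h2⟩
  · exact ⟨⟨1,0,1,0⟩, by refine QuaternionAlgebra.ext ?_ ?_ ?_ ?_ <;>
      simp [qh_mul_mk, qh_mk_mul,
        qh_mk_mul_mk, qh_smul_mk] <;>
      first | ring1 | linear_combination h2 | linear_combination -h2 |
        linear_combination 2*h2 | linear_combination -2*h2⟩
  · exact ⟨⟨1,1,1,1⟩, by refine QuaternionAlgebra.ext ?_ ?_ ?_ ?_ <;>
      simp [qh_mul_mk, qh_mk_mul,
        qh_mk_mul_mk, qh_smul_mk] <;>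
      first | ring1 | linear_combination h2 | linear_combination -h2 |
        linear_combination 2*h2 | linear_combination -2*h2⟩
  · exact ⟨⟨1,1,0,0⟩, by refine QuaternionAlgebra.ext ?_ ?_ ?_ ?_ <;>
      simp [qh_mul_mk, qh_mk_mul,
        qh_mk_mul_mk, qh_smul_mk] <;>
      first | ring1 | linear_combination h2 | linear_combination -h2 |
        linear_combination 2*h2 | linear_combination -2*h2⟩
  · exact ⟨⟨1,0,1,0⟩, by refine QuaternionAlgebra.ext ?_ ?_ ?_ ?_ <;>
      simp [qh_mul_mk, qh_mk_mul,
        qh_mk_mul_mk, qh_smul_mk] <;>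
      first | ring1 | linear_combination h2 | linear_combination -h2 |
        linear_combination 2*h2 | linear_combination -2*h2⟩
  · exact ⟨⟨1,1,1,1⟩, by refine QuaternionAlgebra.ext ?_ ?_ ?_ ?_ <;>
      simp [qh_mul_mk, qh_mk_mul,
        qh_mk_mul_mk, qh_smul_mk] <;>
      first | ring1 | linear_combination h2 | linear_combination -h2 |
        linear_combination 2*h2 | linear_combination -2*h2⟩
  · exact ⟨⟨1,1,1,1⟩, by refine QuaternionAlgebra.ext ?_ ?_ ?_ ?_ <;>
      simp [qh_mul_mk, qh_mk_mul,
        qh_mk_mul_mk, qh_smul_mk] <;>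
      first | ring1 | linear_combination h2 | linear_combination -h2 |
        linear_combination 2*h2 | linear_combination -2*h2⟩
  · exact ⟨⟨1,0,1,0⟩, by refine QuaternionAlgebra.ext ?_ ?_ ?_ ?_ <;>
      simp [qh_mul_mk, qh_mk_mul,
        qh_mk_mul_mk, qh_smul_mk] <;>
      first | ring1 | linear_combination h2 | linear_combination -h2 |
        linear_combination 2*h2 | linear_combination -2*h2⟩
  · exact ⟨⟨1,1,0,0⟩, by refine QuaternionAlgebra.ext ?_ ?_ ?_ ?_ <;>
      simp [qh_mul_mk, qh_mk_mul,
        qh_mk_mul_mk, qh_smul_mk] <;>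
      first | ring1 | linear_combination h2 | linear_combination -h2 |
        linear_combination 2*h2 | linear_combination -2*h2⟩
  · exact ⟨⟨1,1,1,1⟩, by refine QuaternionAlgebra.ext ?_ ?_ ?_ ?_ <;>
      simp [qh_mul_mk, qh_mk_mul,
        qh_mk_mul_mk, qh_smul_mk] <;>
      first | ring1 | linear_combination h2 | linear_combination -h2 |
        linear_combination 2*h2 | linear_combination -2*h2⟩
  · exact ⟨⟨1,0,1,0⟩, by refine QuaternionAlgebra.ext ?_ ?_ ?_ ?_ <;>
      simp [qh_mul_mk, qh_mk_mul,
        qh_mk_mul_mk, qh_smul_mk] <;>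
      first | ring1 | linear_combination h2 | linear_combination -h2 |
        linear_combination 2*h2 | linear_combination -2*h2⟩
  · exact ⟨⟨1,1,1,1⟩, by refine QuaternionAlgebra.ext ?_ ?_ ?_ ?_ <;>
      simp [qh_mul_mk, qh_mk_mul,
        qh_mk_mul_mk, qh_smul_mk] <;>
      first | ring1 | linear_combination h2 | linear_combination -h2 |
        linear_combination 2*h2 | linear_combination -2*h2⟩
  · exact ⟨⟨1,1,1,1⟩, by refine QuaternionAlgebra.ext ?_ ?_ ?_ ?_ <;>
      simp [qh_mul_mk, qh_mk_mul,
        qh_mk_mul_mk, qh_smul_mk] <;>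
      first | ring1 | linear_combination h2 | linear_combination -h2 |
        linear_combination 2*h2 | linear_combination -2*h2⟩
  · exact ⟨⟨1,0,0,0⟩, by refine QuaternionAlgebra.ext ?_ ?_ ?_ ?_ <;>
      simp [qh_mul_mk, qh_mk_mul,
        qh_mk_mul_mk, qh_smul_mk] <;>
      first | ring1 | linear_combination h2 | linear_combination -h2 |
        linear_combination 2*h2 | linear_combination -2*h2⟩

set_option maxHeartbeats 1000000 in
/-- In the quaternion ring `H(Z_{2^r})` with `r > 1`, the set `{0, x}` with
`x = 2^{r-1}(1 + i + j + k)` is a two-sided ideal and is the unique minimal ideal: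
it is minimal, and every nonzero two-sided ideal contains it. -/
theorem quaternion_zmod_two_pow_minimal_ideal (r : ℕ) (hr : 1 < r) :
    ∀ x : ℍ[ZMod (2 ^ r)],
      x = algebraMap (ZMod (2 ^ r)) _ (2 ^ (r - 1)) * ⟨1, 1, 1, 1⟩ →
      ∃ I : TwoSidedIdeal ℍ[ZMod (2 ^ r)],
        (I : Set ℍ[ZMod (2 ^ r)]) = {0, x} ∧ I ≠ ⊥ ∧
        (∀ J : TwoSidedIdeal ℍ[ZMod (2 ^ r)], J ≤ I → J = ⊥ ∨ J = I) ∧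
        (∀ J : TwoSidedIdeal ℍ[ZMod (2 ^ r)], J ≠ ⊥ → I ≤ J) := by
  classical
  intro x hx
  have hr1 : 1 ≤ r := hr.le
  set c : ZMod (2^r) := (2 : ZMod (2^r)) ^ (r-1) with hcdef
  have hcr : (2 : ZMod (2^r)) ^ r = 0 := by
    have h := ZMod.natCast_self ((2:ℕ)^r)
    push_cast at h
    exact h
  have h2c : c * 2 = 0 := by
    rw [hcdef, ← pow_succ]
    have hq : r - 1 + 1 = r := by omega
    rw [hq, hcr]
  have hcc : c + c = 0 := by linear_combination h2c
  have hcne : c ≠ 0 := by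
    intro h0
    haveI : NeZero ((2:ℕ)^r) := ⟨by positivity⟩
    have h1 : (((2:ℕ)^(r-1) : ℕ) : ZMod (2^r)) = 0 := by push_cast; exact h0
    rw [ZMod.natCast_eq_zero_iff] at h1
    have h2 : (2:ℕ)^r ≤ 2^(r-1) := Nat.le_of_dvd (by positivity) h1
    have h3 : (2:ℕ)^(r-1) < 2^r := Nat.pow_lt_pow_right one_lt_two (by omega)
    omega
  have hx' : x = ⟨c,c,c,c⟩ := by
    rw [hx, Quaternion.algebraMap_def]
    refine QuaternionAlgebra.ext ?_ ?_ ?_ ?_ <;>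
      simp [qh_mul_mk, qh_mk_mul,
        qh_mk_mul_mk, qh_smul_mk]
  have hxne : x ≠ 0 := by
    intro h0
    rw [hx'] at h0
    exact hcne (by simpa using congrArg QuaternionAlgebra.re h0)
  have hxx : x + x = 0 := by
    rw [hx']
    refine QuaternionAlgebra.ext ?_ ?_ ?_ ?_ <;> simpa [qh_mk_add_mk] using hcc
  have hnegx : -x = x := by
    rw [hx']
    refine QuaternionAlgebra.ext ?_ ?_ ?_ ?_ <;> simp [qh_neg_mk] <;> linear_combination -hcc
  have habs : ∀ q : ℍ[ZMod (2^r)], (q * x = 0 ∨ q * x = x) ∧ (x * q = 0 ∨ x * q = x) := by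
    intro q
    set s : ZMod (2^r) := q.re + q.imI + q.imJ + q.imK with hs
    have hsx : s • x = (⟨c*s, c*s, c*s, c*s⟩ : ℍ[ZMod (2^r)]) := smulx _ c s x hx'
    have hcs : c * s = 0 ∨ c * s = c := by
      refine aux_half r hr1 (c * s) ?_
      linear_combination s * h2c
    have hval : s • x = 0 ∨ s • x = x := by
      rcases hcs with h | h
      · left
        rw [hsx, h]
        refine QuaternionAlgebra.ext ?_ ?_ ?_ ?_ <;> simp
      · right
        rw [hsx, h, hx']
    constructor
    · rw [mulx _ c h2c q x hx']; exact hval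
    · rw [xmul _ c h2c q x hx']; exact hval
  have mem_char : ∀ w : ℍ[ZMod (2^r)], w ∈ ({0, x} : Set ℍ[ZMod (2^r)]) ↔ w = 0 ∨ w = x := by
    intro w
    simp [Set.mem_insert_iff]
  have pf0 : (0 : ℍ[ZMod (2^r)]) ∈ ({0, x} : Set ℍ[ZMod (2^r)]) :=
    (mem_char 0).mpr (Or.inl rfl)
  have pfadd : ∀ {a b : ℍ[ZMod (2^r)]}, a ∈ ({0, x} : Set ℍ[ZMod (2^r)]) →
      b ∈ ({0, x} : Set ℍ[ZMod (2^r)]) → a + b ∈ ({0, x} : Set ℍ[ZMod (2^r)]) := by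
    intro a b ha hb
    refine (mem_char _).mpr ?_
    rcases (mem_char _).mp ha with rfl | h1
    · rcases (mem_char _).mp hb with rfl | h2
      · exact Or.inl (by rw [add_zero])
      · exact Or.inr (by rw [zero_add, h2])
    · rcases (mem_char _).mp hb with rfl | h2
      · exact Or.inr (by rw [add_zero, h1])
      · exact Or.inl (by rw [h1, h2, hxx])
  have pfneg : ∀ {a : ℍ[ZMod (2^r)]}, a ∈ ({0, x} : Set ℍ[ZMod (2^r)]) →
      -a ∈ ({0, x} : Set ℍ[ZMod (2^r)]) := by
    intro a ha
    refine (mem_char _).mpr ?_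
    rcases (mem_char _).mp ha with rfl | h1
    · exact Or.inl neg_zero
    · exact Or.inr (by rw [h1, hnegx])
  have pfml : ∀ {a b : ℍ[ZMod (2^r)]}, b ∈ ({0, x} : Set ℍ[ZMod (2^r)]) →
      a * b ∈ ({0, x} : Set ℍ[ZMod (2^r)]) := by
    intro a b hb
    refine (mem_char _).mpr ?_
    rcases (mem_char _).mp hb with rfl | h1
    · exact Or.inl (mul_zero a)
    · rw [h1]; exact (habs a).1
  have pfmr : ∀ {a b : ℍ[ZMod (2^r)]}, a ∈ ({0, x} : Set ℍ[ZMod (2^r)]) →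
      a * b ∈ ({0, x} : Set ℍ[ZMod (2^r)]) := by
    intro a b ha
    refine (mem_char _).mpr ?_
    rcases (mem_char _).mp ha with rfl | h1
    · exact Or.inl (zero_mul b)
    · rw [h1]; exact (habs b).2
  refine ⟨TwoSidedIdeal.mk' {0, x} pf0 pfadd pfneg pfml pfmr, ?_, ?_, ?_, ?_⟩
  · exact TwoSidedIdeal.coe_mk' _ _ _ _ _ _
  · intro hbot
    have hxI : x ∈ TwoSidedIdeal.mk' ({0, x} : Set ℍ[ZMod (2^r)]) pf0 pfadd pfneg pfml pfmr :=
      (TwoSidedIdeal.mem_mk' _ _ _ _ _ _ x).mpr ((mem_char x).mpr (Or.inr rfl))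
    rw [hbot] at hxI
    exact hxne ((TwoSidedIdeal.mem_bot _).mp hxI)
  · intro J hJ
    by_cases hxJ : x ∈ J
    · right
      refine le_antisymm hJ ?_
      rw [TwoSidedIdeal.le_iff]
      intro w hw
      simp only [SetLike.mem_coe, TwoSidedIdeal.mem_mk'] at hw
      rcases (mem_char _).mp hw with rfl | h1
      · exact SetLike.mem_coe.mpr J.zero_mem
      · exact SetLike.mem_coe.mpr (h1 ▸ hxJ)
    · left
      refine le_bot_iff.mp ?_
      rw [TwoSidedIdeal.le_iff]
      intro w hw
      rw [SetLike.mem_coe] at hw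
      have hw' := hJ hw
      simp only [SetLike.mem_coe, TwoSidedIdeal.mem_mk'] at hw'
      rcases (mem_char _).mp hw' with rfl | h1
      · exact SetLike.mem_coe.mpr ((TwoSidedIdeal.mem_bot _).mpr rfl)
      · exact absurd (h1 ▸ hw) hxJ
  · intro J hJ
    have hex : ∃ q, q ∈ J ∧ q ≠ 0 := by
      by_contra hcon
      push_neg at hcon
      apply hJ
      refine le_bot_iff.mp ?_
      rw [TwoSidedIdeal.le_iff]
      intro w hw
      rw [SetLike.mem_coe] at hw
      have hw0 := hcon w hw
      subst hw0
      exact SetLike.mem_coe.mpr ((TwoSidedIdeal.mem_bot _).mpr rfl)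
    obtain ⟨q, hqJ, hqne⟩ := hex
    have hP : ∃ n, (2 : ℍ[ZMod (2^r)])^(n+1) * q = 0 := by
      refine ⟨r - 1, ?_⟩
      have hrr : r - 1 + 1 = r := by omega
      rw [hrr]
      have hcoe2 : ((2 : ZMod (2^r)) : ℍ[ZMod (2^r)]) = 2 := by norm_cast
      have h20 : (2 : ℍ[ZMod (2^r)])^r = 0 := by
        rw [← hcoe2, ← Quaternion.coe_pow, hcr, Quaternion.coe_zero]
      rw [h20, zero_mul]
    set t := Nat.find hP with htdef
    have ht : (2 : ℍ[ZMod (2^r)])^(t+1) * q = 0 := Nat.find_spec hP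
    set y : ℍ[ZMod (2^r)] := (2 : ℍ[ZMod (2^r)])^t * q with hydef
    have hyJ : y ∈ J := J.mul_mem_left _ _ hqJ
    have hy2 : y + y = 0 := by
      have hstep : y + y = (2 : ℍ[ZMod (2^r)])^(t+1) * q := by
        rw [hydef, pow_succ, mul_assoc, two_mul, mul_add]
      rw [hstep, ht]
    have hyne : y ≠ 0 := by
      intro h0
      rcases Nat.eq_zero_or_pos t with h | h
      · rw [hydef, h, pow_zero, one_mul] at h0
        exact hqne h0
      · have hmin := Nat.find_min hP (show t - 1 < t by omega)
        apply hmin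
        have hq1 : t - 1 + 1 = t := by omega
        rw [hq1, ← hydef, h0]
    have hcomp : ∀ u : ZMod (2^r), u + u = 0 → u = 0 ∨ u = c := fun u hu => aux_half r hr1 u hu
    have ha : y.re = 0 ∨ y.re = c :=
      hcomp _ (by simpa using congrArg QuaternionAlgebra.re hy2)
    have hb : y.imI = 0 ∨ y.imI = c :=
      hcomp _ (by simpa using congrArg QuaternionAlgebra.imI hy2)
    have hcJ : y.imJ = 0 ∨ y.imJ = c :=
      hcomp _ (by simpa using congrArg QuaternionAlgebra.imJ hy2)
    have hd : y.imK = 0 ∨ y.imK = c :=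
      hcomp _ (by simpa using congrArg QuaternionAlgebra.imK hy2)
    obtain ⟨z, hz⟩ := aux_cases _ c h2c x y hx' ha hb hcJ hd hyne
    have hxJ : x ∈ J := hz ▸ J.mul_mem_right _ _ hyJ
    rw [TwoSidedIdeal.le_iff]
    intro w hw
    simp only [SetLike.mem_coe, TwoSidedIdeal.mem_mk'] at hw
    rcases (mem_char _).mp hw with rfl | h1
    · exact SetLike.mem_coe.mpr J.zero_mem
    · exact SetLike.mem_coe.mpr (h1 ▸ hxJ)
end

section
/- Let R = GR(p^r, m), let H be a quaternion ring over R, let B be a left H-linear block code of length n with minimum Hamming distance d, and let tau(B) be its image in R^{4n} under the coordinate map tau(x_0 + x_1 i + x_2 j + x_3 k) = (x_0, x_1, x_2, x_3). If delta is the minimum homogeneous distance of tau(B) with respect to the homogeneous weight with average value Gamma = (p^m-1)p^{m(r-2)}, then Gamma * d <= delta <= p^{m(r-1)} * 4d. -/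
open scoped Quaternion

/-- The Galois ring `GR(p^r, m)`, realized as `Z_{p^r}[X]/(h)` for a monic degree-`m`
polynomial `h` whose mod-`p` reduction is irreducible. -/
abbrev GaloisRing (p r : ℕ) (h : Polynomial (ZMod (p ^ r))) : Type :=
  Polynomial (ZMod (p ^ r)) ⧸ Ideal.span {h}

open scoped Classical in
/-- The homogeneous weight on the Galois ring `GR(p^r, m)`: it takes the value
`p^{m(r-1)}` on nonzero elements of the minimal ideal `(p^{r-1})` and the value
`Γ = (p^m - 1) p^{m(r-2)}` on all other nonzero elements. -/
noncomputable def homWt (p r m : ℕ) (h : Polynomial (ZMod (p ^ r)))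
    (x : GaloisRing p r h) : ℝ :=
  if x = 0 then 0
  else if x ∈ (Ideal.span {(p : GaloisRing p r h) ^ (r - 1)} : Ideal (GaloisRing p r h))
    then (p : ℝ) ^ ((m : ℤ) * ((r : ℤ) - 1))
  else ((p : ℝ) ^ m - 1) * (p : ℝ) ^ ((m : ℤ) * ((r : ℤ) - 2))

/-- Let `B` be a left linear block code of length `n` over a quaternion ring `H` over
`R = GR(p^r, m)` with minimum Hamming distance `d`, and let `δ` be the minimum
homogeneous distance of the image code `τ(B) ⊆ R^{4n}` (where
`τ(x₀ + x₁i + x₂j + x₃k) = (x₀, x₁, x₂, x₃)` coordinate-wise) with respect to the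
homogeneous weight with average value `Γ = (p^m - 1) p^{m(r-2)}`. Then
`Γ d ≤ δ ≤ p^{m(r-1)} · 4d`. -/
theorem homDistance_bounds (p r m : ℕ) [Fact p.Prime] (hr : 0 < r) (hm : 0 < m)
    (h : Polynomial (ZMod (p ^ r))) (hmonic : h.Monic) (hdeg : h.natDegree = m)
    (hirr : Irreducible (h.map (ZMod.castHom (dvd_pow_self p hr.ne') (ZMod p))))
    (a b : (GaloisRing p r h)ˣ) (n : ℕ)
    (B : Submodule ℍ[GaloisRing p r h, (a : GaloisRing p r h), (b : GaloisRing p r h)]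
      (Fin n → ℍ[GaloisRing p r h, (a : GaloisRing p r h), (b : GaloisRing p r h)]))
    (d : ℕ) (δ : ℝ)
    (hd : IsLeast {k : ℕ | ∃ c ∈ B, c ≠ 0 ∧ k = Nat.card {t : Fin n // c t ≠ 0}} d)
    (hδ : IsLeast {x : ℝ | ∃ c ∈ B, c ≠ 0 ∧ x = ∑ t : Fin n,
        (homWt p r m h (c t).re + homWt p r m h (c t).imI +
          homWt p r m h (c t).imJ + homWt p r m h (c t).imK)} δ) :
    ((p : ℝ) ^ m - 1) * (p : ℝ) ^ ((m : ℤ) * ((r : ℤ) - 2)) * d ≤ δ ∧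
      δ ≤ (p : ℝ) ^ ((m : ℤ) * ((r : ℤ) - 1)) * (4 * d) := by

  classical
  obtain ⟨⟨c, hcB, hc0, hcd⟩, hdlb⟩ := hd
  obtain ⟨⟨e, heB, he0, hew⟩, hδlb⟩ := hδ
  have hp1 : (1:ℝ) < p := by exact_mod_cast (Fact.out : p.Prime).one_lt
  have hp0 : (0:ℝ) < p := by linarith
  set P : ℝ := (p:ℝ) ^ ((m : ℤ) * ((r : ℤ) - 1)) with hP
  set Γ : ℝ := ((p:ℝ) ^ m - 1) * (p:ℝ) ^ ((m : ℤ) * ((r : ℤ) - 2)) with hΓ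
  have hPpos : 0 < P := zpow_pos hp0 _
  have hpm : (1:ℝ) ≤ (p:ℝ) ^ m := one_le_pow₀ hp1.le
  have hΓ0 : 0 ≤ Γ := mul_nonneg (by linarith) (zpow_pos hp0 _).le
  have hΓP : Γ ≤ P := by
    have heq : ((p:ℝ) ^ m) * (p:ℝ) ^ ((m : ℤ) * ((r : ℤ) - 2)) = P := by
      rw [hP, ← zpow_natCast (p:ℝ) m, ← zpow_add₀ hp0.ne']
      ring_nf
    calc Γ ≤ (p:ℝ) ^ m * (p:ℝ) ^ ((m : ℤ) * ((r : ℤ) - 2)) :=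
          mul_le_mul_of_nonneg_right (by linarith) (zpow_pos hp0 _).le
      _ = P := heq
  have hwle : ∀ x, homWt p r m h x ≤ P := by
    intro x
    unfold homWt
    split_ifs <;> [exact hPpos.le; exact le_rfl; exact hΓP]
  have hwnn : ∀ x, 0 ≤ homWt p r m h x := by
    intro x
    unfold homWt
    split_ifs <;> [exact le_rfl; exact hPpos.le; exact hΓ0]
  have hwge : ∀ x, x ≠ 0 → Γ ≤ homWt p r m h x := by
    intro x hx
    unfold homWt
    split_ifs with h1 h2
    · exact absurd h1 hx
    · exact hΓP
    · exact le_rfl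
  have hw0 : homWt p r m h 0 = 0 := by unfold homWt; simp
  -- weight of a quaternion coordinate
  set w : ℍ[GaloisRing p r h, (a : GaloisRing p r h), (b : GaloisRing p r h)] → ℝ :=
    fun q => homWt p r m h q.re + homWt p r m h q.imI +
      homWt p r m h q.imJ + homWt p r m h q.imK with hwdef
  have hwq_nn : ∀ q, 0 ≤ w q := fun q => by
    have := hwnn q.re; have := hwnn q.imI; have := hwnn q.imJ; have := hwnn q.imK
    simp only [hwdef]; linarith
  have hwq_le : ∀ q, w q ≤ 4 * P := fun q => by
    have := hwle q.re; have := hwle q.imI; have := hwle q.imJ; have := hwle q.imK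
    simp only [hwdef]; linarith
  have hwq_zero : w 0 = 0 := by simp [hwdef, hw0]
  have hwq_ge : ∀ q, q ≠ 0 → Γ ≤ w q := by
    intro q hq
    have hne : q.re ≠ 0 ∨ q.imI ≠ 0 ∨ q.imJ ≠ 0 ∨ q.imK ≠ 0 := by
      by_contra hcon
      push_neg at hcon
      obtain ⟨h1, h2, h3, h4⟩ := hcon
      exact hq (QuaternionAlgebra.ext (by simpa using h1) (by simpa using h2)
        (by simpa using h3) (by simpa using h4))
    have n1 := hwnn q.re; have n2 := hwnn q.imI; have n3 := hwnn q.imJ; have n4 := hwnn q.imK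
    simp only [hwdef]
    rcases hne with h' | h' | h' | h' <;> have := hwge _ h' <;> linarith
  -- lower bound
  have hcard : ∀ (c : Fin n → ℍ[GaloisRing p r h, (a : GaloisRing p r h),
      (b : GaloisRing p r h)]), Nat.card {t : Fin n // c t ≠ 0} =
      (Finset.univ.filter (fun t => c t ≠ 0)).card := by
    intro c
    rw [Nat.card_eq_fintype_card, Fintype.card_subtype]
  have hlow : Γ * d ≤ δ := by
    have hde : d ≤ Nat.card {t : Fin n // e t ≠ 0} := hdlb ⟨e, heB, he0, rfl⟩
    rw [hcard] at hde
    set S := Finset.univ.filter (fun t => e t ≠ 0) with hS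
    have h1 : (Γ * d : ℝ) ≤ Γ * S.card := by
      apply mul_le_mul_of_nonneg_left _ hΓ0
      exact_mod_cast hde
    have h2 : Γ * S.card ≤ ∑ t ∈ S, w (e t) := by
      rw [mul_comm]
      calc (S.card : ℝ) * Γ = ∑ _t ∈ S, Γ := by
            rw [Finset.sum_const, nsmul_eq_mul]
        _ ≤ ∑ t ∈ S, w (e t) := by
            apply Finset.sum_le_sum
            intro t ht
            exact hwq_ge _ (Finset.mem_filter.mp ht).2
    have h3 : ∑ t ∈ S, w (e t) ≤ ∑ t : Fin n, w (e t) := by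
      apply Finset.sum_le_sum_of_subset_of_nonneg (Finset.filter_subset _ _)
      intro t _ _
      exact hwq_nn _
    rw [hew]
    calc Γ * d ≤ Γ * S.card := h1
      _ ≤ ∑ t ∈ S, w (e t) := h2
      _ ≤ ∑ t : Fin n, w (e t) := h3
  have hup : δ ≤ P * (4 * d) := by
    have hδc : δ ≤ ∑ t : Fin n, w (c t) := hδlb ⟨c, hcB, hc0, rfl⟩
    set S := Finset.univ.filter (fun t => c t ≠ 0) with hS
    have hSd : (S.card : ℕ) = d := by rw [hcd, hcard]
    have h4 : ∑ t : Fin n, w (c t) ≤ ∑ t : Fin n,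
        (if c t ≠ 0 then 4 * P else 0) := by
      apply Finset.sum_le_sum
      intro t _
      by_cases hct : c t = 0
      · simp [hct, hwq_zero]
      · rw [if_pos hct]
        exact hwq_le _
    have h5 : ∑ t : Fin n, (if c t ≠ 0 then (4 * P : ℝ) else 0) = S.card * (4 * P) := by
      rw [← Finset.sum_filter, Finset.sum_const, nsmul_eq_mul]
    calc δ ≤ ∑ t : Fin n, w (c t) := hδc
      _ ≤ ∑ t : Fin n, (if c t ≠ 0 then 4 * P else 0) := h4
      _ = S.card * (4 * P) := h5
      _ = P * (4 * d) := by rw [hSd]; ring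
  exact ⟨hlow, hup⟩
end
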